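/- Let E be a finite-dimensional real inner product space with unit sphere S, and let C ⊆ S be a compact subset such that no great circle of E is contained in C (i.e. for every two-dimensional linear subspace P of E, S ∩ P is not a subset of C). Then there exists δ > 0 such that every two-dimensional linear subspace P of E contains a unit vector w with ‖w − w'‖ > δ for every w' ∈ C. -/

import Mathlib

open Metric

private lemma flagwise_norm_sq_combo {E : Type*} [NormedAddCommGroup E] [InnerProductSpace ℝ E]
    {u v : E} (hu : ‖u‖ = 1) (hv : ‖v‖ = 1) (huv : (inner ℝ u v : ℝ) = 0) (a c : ℝ) :
    ‖a • u + c • v‖ ^ 2 = a ^ 2 + c ^ 2 := by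
  rw [norm_add_sq_real, real_inner_smul_left, real_inner_smul_right, huv, norm_smul, norm_smul,
    hu, hv]
  simp [mul_pow, abs_eq_self.mpr, sq_abs]

private lemma flagwise_orthonormal_pair {E : Type*} [NormedAddCommGroup E]
    [InnerProductSpace ℝ E] {u v : E} (hu : ‖u‖ = 1) (hv : ‖v‖ = 1)
    (huv : (inner ℝ u v : ℝ) = 0) : Orthonormal ℝ ![u, v] := by
  constructor
  · intro i; fin_cases i <;> simpa using (by assumption : _)
  · intro i j hij
    fin_cases i <;> fin_cases j <;> simp_all [real_inner_comm u v]

/-- Let `E` be a finite-dimensional real inner product space with unit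
sphere `S`, and let `C ⊆ S` be compact such that no great circle `S ∩ P` (with `P` a
two-dimensional subspace) is contained in `C`. Then there is `δ > 0` such that every
two-dimensional subspace `P` contains a unit vector `w` with `‖w - w'‖ > δ` for every
`w' ∈ C`. -/
theorem flagwise_stmt5 (E : Type*) [NormedAddCommGroup E] [InnerProductSpace ℝ E]
    [FiniteDimensional ℝ E]
    (C : Set E) (hCcpt : IsCompact C) (hCS : C ⊆ {w : E | ‖w‖ = 1})
    (hgc : ∀ P : Submodule ℝ E, Module.finrank ℝ P = 2 →
      ¬ ({w : E | ‖w‖ = 1} ∩ (P : Set E) ⊆ C)) :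
    ∃ δ > 0, ∀ P : Submodule ℝ E, Module.finrank ℝ P = 2 →
      ∃ w ∈ P, ‖w‖ = 1 ∧ ∀ w' ∈ C, δ < ‖w - w'‖ := by
  rcases C.eq_empty_or_nonempty with rfl | hne
  · -- trivial case : C is empty
    refine ⟨1, one_pos, fun P hP => ?_⟩
    have : Nontrivial P := Module.nontrivial_of_finrank_pos (R := ℝ) (by omega)
    obtain ⟨x, hx⟩ := exists_ne (0 : P)
    have hxn : ‖(x : E)‖ ≠ 0 := by
      simpa [Submodule.coe_eq_zero] using hx
    refine ⟨‖(x : E)‖⁻¹ • (x : E), P.smul_mem _ x.2, ?_, by simp⟩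
    rw [norm_smul, norm_inv, norm_norm, inv_mul_cancel₀ hxn]
  -- main case
  set V : Set (E × E) :=
    {p | ‖p.1‖ = 1 ∧ ‖p.2‖ = 1 ∧ (inner ℝ p.1 p.2 : ℝ) = 0} with hV
  have hVclosed : IsClosed V := by
    have h1 : Continuous fun p : E × E => ‖p.1‖ := continuous_fst.norm
    have h2 : Continuous fun p : E × E => ‖p.2‖ := continuous_snd.norm
    have h3 : Continuous fun p : E × E => (inner ℝ p.1 p.2 : ℝ) :=
      continuous_inner
    exact (isClosed_eq h1 continuous_const).inter
      ((isClosed_eq h2 continuous_const).inter (isClosed_eq h3 continuous_const))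
  have hVbdd : Bornology.IsBounded V := by
    apply (Metric.isBounded_closedBall (x := (0 : E × E)) (r := 1)).subset
    rintro ⟨u, v⟩ ⟨h1, h2, -⟩
    simp only [Metric.mem_closedBall, dist_zero_right, Prod.norm_def]
    simp [h1, h2]
  have hVcpt : IsCompact V := Metric.isCompact_of_isClosed_isBounded hVclosed hVbdd
  set U : ℕ → Set (E × E) := fun n =>
    {p | ∃ a c : ℝ, a ^ 2 + c ^ 2 = 1 ∧ (1 : ℝ) / (n + 1) < infDist (a • p.1 + c • p.2) C}
    with hU
  have hUopen : ∀ n, IsOpen (U n) := by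
    intro n
    have : U n = ⋃ (a : ℝ) (c : ℝ) (_ : a ^ 2 + c ^ 2 = 1),
        {p : E × E | (1 : ℝ) / (n + 1) < infDist (a • p.1 + c • p.2) C} := by
      ext p; simp [hU]
    rw [this]
    refine isOpen_iUnion fun a => isOpen_iUnion fun c => isOpen_iUnion fun _ => ?_
    have hcont : Continuous fun p : E × E => infDist (a • p.1 + c • p.2) C :=
      (continuous_infDist_pt C).comp ((continuous_fst.const_smul a).add (continuous_snd.const_smul c))
    exact isOpen_lt continuous_const hcont
  have hUmono : Monotone U := by
    intro n m hnm p hp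
    obtain ⟨a, c, hac, hlt⟩ := hp
    refine ⟨a, c, hac, lt_of_le_of_lt ?_ hlt⟩
    apply one_div_le_one_div_of_le
    · positivity
    · exact_mod_cast by exact_mod_cast add_le_add_left (Nat.cast_le.mpr hnm) 1
  have hcover : V ⊆ ⋃ n, U n := by
    rintro ⟨u, v⟩ ⟨hu, hv, huv⟩
    -- the span of u, v is two-dimensional
    have hon : Orthonormal ℝ ![u, v] := flagwise_orthonormal_pair hu hv huv
    set P := Submodule.span ℝ (Set.range ![u, v]) with hP
    have hrank : Module.finrank ℝ P = 2 := by
      rw [finrank_span_eq_card hon.linearIndependent]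
      simp
    obtain ⟨w, hwmem, hwC⟩ := Set.not_subset.mp (hgc P hrank)
    obtain ⟨hwS, hwP⟩ := hwmem
    have hrange : Set.range ![u, v] = {u, v} := by
      simp [Matrix.range_cons, Matrix.range_empty, Set.pair_comm]
    rw [hP, hrange] at hwP
    obtain ⟨a, c, hw⟩ := Submodule.mem_span_pair.mp hwP
    have hac : a ^ 2 + c ^ 2 = 1 := by
      have := flagwise_norm_sq_combo hu hv huv a c
      rw [hw] at this
      rw [← this, hwS]
      norm_num
    have hpos : 0 < infDist w C :=
      (hCcpt.isClosed.notMem_iff_infDist_pos hne).mp hwC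
    obtain ⟨n, hn⟩ := exists_nat_one_div_lt hpos
    refine Set.mem_iUnion.mpr ⟨n, a, c, hac, ?_⟩
    simpa [hw] using hn
  obtain ⟨t, ht⟩ := hVcpt.elim_finite_subcover U hUopen hcover
  set N := t.sup id with hN
  have hVU : V ⊆ U N := by
    refine ht.trans ?_
    intro p hp
    obtain ⟨n, hn, hpn⟩ := Set.mem_iUnion₂.mp hp
    exact hUmono (Finset.le_sup (f := id) hn) hpn
  refine ⟨1 / (N + 1), by positivity, fun P hP => ?_⟩
  have : FiniteDimensional ℝ P := inferInstance
  let b := (stdOrthonormalBasis ℝ P).reindex (finCongr hP)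
  have hb := b.orthonormal
  set u : E := (b 0 : E) with hu'
  set v : E := (b 1 : E) with hv'
  have hu : ‖u‖ = 1 := hb.1 0
  have hv : ‖v‖ = 1 := hb.1 1
  have huv : (inner ℝ u v : ℝ) = 0 := hb.2 (by decide : (0 : Fin 2) ≠ 1)
  have hmem : ((u, v) : E × E) ∈ V := ⟨hu, hv, huv⟩
  obtain ⟨a, c, hac, hlt⟩ := hVU hmem
  refine ⟨a • u + c • v, P.add_mem (P.smul_mem _ (b 0).2) (P.smul_mem _ (b 1).2), ?_, ?_⟩
  · have hsq := flagwise_norm_sq_combo hu hv huv a c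
    rw [hac] at hsq
    nlinarith [norm_nonneg (a • u + c • v)]
  · intro w' hw'
    calc (1 : ℝ) / (N + 1) < infDist (a • u + c • v) C := hlt
      _ ≤ dist (a • u + c • v) w' := infDist_le_dist_of_mem hw'
      _ = ‖a • u + c • v - w'‖ := dist_eq_norm _ _
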